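/- Let D be a Young diagram, p, q coprime positive integers, K a positive integer, P = Kp, Q = Kq, with qx + py \leq Kpq - p - q for every box (x,y) \in D. Then |{c \in D : p·l(c) \geq q·(a(c)+1)}| + |R^+_{P,Q} \ D| = |{c' \in R_{P,Q} \ D : p·l(c') \geq q·(a(c')+1)}|, where R^+_{P,Q} = {(x,y) \in (Z_{\geq 0})^2 : qx + py \leq Kpq - p - q} and R_{P,Q} = {0,...,P-1} \times {0,...,Q-1}. -/

import Mathlib

/-- A Young diagram: a finite down-closed subset of ℕ². -/
def IsYoung (D : Finset (ℕ × ℕ)) : Prop :=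
  ∀ x y x' y', (x, y) ∈ D → x' ≤ x → y' ≤ y → (x', y') ∈ D

/-- Arm length of a box inside the diagram. -/
def arm (D : Finset (ℕ × ℕ)) (c : ℕ × ℕ) : ℕ :=
  (D.filter fun d => d.2 = c.2 ∧ c.1 < d.1).card

/-- Leg length of a box inside the diagram. -/
def leg (D : Finset (ℕ × ℕ)) (c : ℕ × ℕ) : ℕ :=
  (D.filter fun d => d.1 = c.1 ∧ c.2 < d.2).card

/-- Arm length of a box in the complement of the diagram. -/
def coArm (D : Finset (ℕ × ℕ)) (c : ℕ × ℕ) : ℕ :=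
  ((Finset.range c.1).filter fun x' => (x', c.2) ∉ D).card

/-- Leg length of a box in the complement of the diagram. -/
def coLeg (D : Finset (ℕ × ℕ)) (c : ℕ × ℕ) : ℕ :=
  ((Finset.range c.2).filter fun y' => (c.1, y') ∉ D).card

namespace GMaux
open Finset

/-- row length λ_y -/
def row (D : Finset (ℕ × ℕ)) (y : ℕ) : ℕ := (D.filter fun c => c.2 = y).card
/-- column height μ_x -/
def col (D : Finset (ℕ × ℕ)) (x : ℕ) : ℕ := (D.filter fun c => c.1 = x).card

lemma downclosed_mem_iff (s : Finset ℕ) (h : ∀ a ∈ s, ∀ b, b ≤ a → b ∈ s) (x : ℕ) :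
    x ∈ s ↔ x < s.card := by
  constructor
  · intro hx
    by_contra hc
    push_neg at hc
    have hsub : range (x+1) ⊆ s := fun b hb => h x hx b (by simpa using Nat.lt_succ_iff.mp (mem_range.mp hb))
    have := card_le_card hsub
    simp [card_range] at this
    omega
  · intro hx
    by_contra hc
    have hsub : s ⊆ range x := by
      intro a ha
      rw [mem_range]
      by_contra hge
      exact hc (h a ha x (by omega))
    have := card_le_card hsub
    simp [card_range] at this
    omega

lemma mem_row_iff {D : Finset (ℕ × ℕ)} (hD : IsYoung D) (x y : ℕ) :
    (x, y) ∈ D ↔ x < row D y := by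
  classical
  have himg : row D y = ((D.filter fun c => c.2 = y).image Prod.fst).card := by
    rw [card_image_of_injOn]
    · rfl
    · intro a ha b hb hab
      simp only [mem_coe, mem_filter] at ha hb
      exact Prod.ext hab (ha.2.trans hb.2.symm)
  have hmem : ∀ x', x' ∈ (D.filter fun c => c.2 = y).image Prod.fst ↔ (x', y) ∈ D := by
    intro x'
    simp only [mem_image, mem_filter]
    constructor
    · rintro ⟨⟨a, b⟩, ⟨hab, hb⟩, rfl⟩; exact hb ▸ hab
    · intro h; exact ⟨(x', y), ⟨h, rfl⟩, rfl⟩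
  rw [himg, ← downclosed_mem_iff _ ?_ x, hmem]
  intro a ha b hba
  rw [hmem] at ha ⊢
  exact hD a y b y ha hba le_rfl

lemma mem_col_iff {D : Finset (ℕ × ℕ)} (hD : IsYoung D) (x y : ℕ) :
    (x, y) ∈ D ↔ y < col D x := by
  classical
  have himg : col D x = ((D.filter fun c => c.1 = x).image Prod.snd).card := by
    rw [card_image_of_injOn]
    · rfl
    · intro a ha b hb hab
      simp only [mem_coe, mem_filter] at ha hb
      exact Prod.ext (ha.2.trans hb.2.symm) hab
  have hmem : ∀ y', y' ∈ (D.filter fun c => c.1 = x).image Prod.snd ↔ (x, y') ∈ D := by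
    intro y'
    simp only [mem_image, mem_filter]
    constructor
    · rintro ⟨⟨a, b⟩, ⟨hab, hb⟩, rfl⟩; exact hb ▸ hab
    · intro h; exact ⟨(x, y'), ⟨h, rfl⟩, rfl⟩
  rw [himg, ← downclosed_mem_iff _ ?_ y, hmem]
  intro a ha b hba
  rw [hmem] at ha ⊢
  exact hD x a x b ha le_rfl hba

lemma col_antitone {D : Finset (ℕ × ℕ)} (hD : IsYoung D) {x x' : ℕ} (h : x ≤ x') :
    col D x' ≤ col D x := by
  rcases Nat.eq_zero_or_pos (col D x') with h0 | h0
  · omega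
  · have : (x', col D x' - 1) ∈ D := (mem_col_iff hD _ _).2 (by omega)
    have : (x, col D x' - 1) ∈ D := hD x' _ x _ this h le_rfl
    have := (mem_col_iff hD _ _).1 this
    omega

lemma row_antitone {D : Finset (ℕ × ℕ)} (hD : IsYoung D) {y y' : ℕ} (h : y ≤ y') :
    row D y' ≤ row D y := by
  rcases Nat.eq_zero_or_pos (row D y') with h0 | h0
  · omega
  · have : (row D y' - 1, y') ∈ D := (mem_row_iff hD _ _).2 (by omega)
    have : (row D y' - 1, y) ∈ D := hD _ y' _ y this le_rfl h
    have := (mem_row_iff hD _ _).1 this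
    omega

lemma arm_eq {D : Finset (ℕ × ℕ)} (hD : IsYoung D) (x y : ℕ) :
    arm D (x, y) = row D y - (x + 1) := by
  classical
  have : (D.filter fun d => d.2 = y ∧ x < d.1) =
      (Finset.Ico (x+1) (row D y)).image (fun x' => (x', y)) := by
    ext ⟨a, b⟩
    simp only [mem_filter, mem_image, mem_Ico]
    constructor
    · rintro ⟨hab, rfl, hx⟩
      exact ⟨a, ⟨by omega, (mem_row_iff hD _ _).1 hab⟩, rfl⟩
    · rintro ⟨a', ⟨h1, h2⟩, heq⟩
      obtain ⟨rfl, rfl⟩ : a' = a ∧ y = b := by simpa [Prod.ext_iff] using heq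
      exact ⟨(mem_row_iff hD _ _).2 h2, rfl, by omega⟩
  rw [arm, this, card_image_of_injective _ (fun a b hab => by simpa [Prod.ext_iff] using hab)]
  simp [Nat.card_Ico]

lemma leg_eq {D : Finset (ℕ × ℕ)} (hD : IsYoung D) (x y : ℕ) :
    leg D (x, y) = col D x - (y + 1) := by
  classical
  have : (D.filter fun d => d.1 = x ∧ y < d.2) =
      (Finset.Ico (y+1) (col D x)).image (fun y' => (x, y')) := by
    ext ⟨a, b⟩
    simp only [mem_filter, mem_image, mem_Ico]
    constructor
    · rintro ⟨hab, rfl, hy⟩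
      exact ⟨b, ⟨by omega, (mem_col_iff hD _ _).1 hab⟩, rfl⟩
    · rintro ⟨b', ⟨h1, h2⟩, heq⟩
      obtain ⟨rfl, rfl⟩ : x = a ∧ b' = b := by simpa [Prod.ext_iff] using heq
      exact ⟨(mem_col_iff hD _ _).2 h2, rfl, by omega⟩
  rw [leg, this, card_image_of_injective _ (fun a b hab => by simpa [Prod.ext_iff] using hab)]
  simp [Nat.card_Ico]

lemma coArm_eq {D : Finset (ℕ × ℕ)} (hD : IsYoung D) {x y : ℕ} (h : row D y ≤ x) :
    coArm D (x, y) = x - row D y := by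
  classical
  have : ((Finset.range x).filter fun x' => (x', y) ∉ D) = Finset.Ico (row D y) x := by
    ext a
    simp only [mem_filter, mem_range, mem_Ico, mem_row_iff hD]
    omega
  rw [coArm, this]
  simp [Nat.card_Ico]

lemma coLeg_eq {D : Finset (ℕ × ℕ)} (hD : IsYoung D) {x y : ℕ} (h : col D x ≤ y) :
    coLeg D (x, y) = y - col D x := by
  classical
  have : ((Finset.range y).filter fun y' => (x, y') ∉ D) = Finset.Ico (col D x) y := by
    ext a
    simp only [mem_filter, mem_range, mem_Ico, mem_col_iff hD]
    omega
  rw [coLeg, this]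
  simp [Nat.card_Ico]

end GMaux

namespace GMaux
open Finset

section Path

variable (p q K : ℕ) (E : Finset (ℕ × ℕ))

/-- index of the E-step of column x along the boundary path -/
def tE (x : ℕ) : ℕ := x + (K*q - col E x)
/-- index of the S-step of row y along the boundary path -/
def tS (y : ℕ) : ℕ := row E y + (K*q - 1 - y)
/-- number of E-steps strictly before time t -/
def XX (t : ℕ) : ℕ := ((range (K*p)).filter fun x => tE q K E x < t).card
/-- the value q·x + p·y of the path point at time t -/
def dd (t : ℕ) : ℤ := (p+q) * XX p q K E t + p*(K*q) - p*t

variable {p q K E}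
variable (hE : IsYoung E) (hb : ∀ c ∈ E, c.1 < K*p ∧ c.2 < K*q)

include hE hb

lemma colE_le (x : ℕ) : col E x ≤ K*q := by
  rcases Nat.eq_zero_or_pos (col E x) with h0 | h0
  · omega
  · have : (x, col E x - 1) ∈ E := (mem_col_iff hE _ _).2 (by omega)
    have := (hb _ this).2
    omega

lemma rowE_le (y : ℕ) : row E y ≤ K*p := by
  rcases Nat.eq_zero_or_pos (row E y) with h0 | h0
  · omega
  · have : (row E y - 1, y) ∈ E := (mem_row_iff hE _ _).2 (by omega)
    have := (hb _ this).1
    omega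

lemma tE_lt_tE {x x' : ℕ} (h : x < x') : tE q K E x < tE q K E x' := by
  have h1 := col_antitone hE h.le
  have h2 := colE_le hE hb x
  unfold tE; omega

lemma tE_lt_iff {x x' : ℕ} : tE q K E x < tE q K E x' ↔ x < x' := by
  constructor
  · intro h
    by_contra hc
    push_neg at hc
    rcases hc.lt_or_eq with h' | rfl
    · exact absurd (tE_lt_tE hE hb h') (by omega)
    · omega
  · exact tE_lt_tE hE hb

omit hE hb in
lemma tE_lt_N {x : ℕ} (hx : x < K*p) : tE q K E x < K*p + K*q := by
  unfold tE; omega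

lemma tS_lt_N {y : ℕ} (hy : y < K*q) : tS q K E y < K*p + K*q := by
  have := rowE_le hE hb y
  unfold tS; omega

omit hb in
lemma tS_lt_tS {y y' : ℕ} (h : y < y') (hy' : y' < K*q) : tS q K E y' < tS q K E y := by
  have h1 := row_antitone hE h.le
  unfold tS; omega

lemma tE_ne_tS (x y : ℕ) (hy : y < K*q) : tE q K E x ≠ tS q K E y := by
  have h1 := colE_le hE hb x
  by_cases hm : (x, y) ∈ E
  · have h2 := (mem_row_iff hE x y).1 hm
    have h3 := (mem_col_iff hE x y).1 hm
    unfold tE tS; omega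
  · have h2 : ¬ x < row E y := fun h => hm ((mem_row_iff hE x y).2 h)
    have h3 : ¬ y < col E x := fun h => hm ((mem_col_iff hE x y).2 h)
    unfold tE tS; omega

lemma cover {t : ℕ} (ht : t < K*p + K*q) :
    (∃ x < K*p, tE q K E x = t) ∨ (∃ y < K*q, tS q K E y = t) := by
  classical
  set Es : Finset ℕ := (range (K*p)).image (tE q K E) with hEs
  set Ss : Finset ℕ := (range (K*q)).image (tS q K E) with hSs
  have hcardE : Es.card = K*p := by
    rw [hEs, card_image_of_injOn, card_range]
    intro a _ b _ hab
    by_contra hne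
    rcases Nat.lt_or_ge a b with h | h
    · exact absurd hab (by have := tE_lt_tE hE hb h; omega)
    · have : b < a := by omega
      exact absurd hab (by have := tE_lt_tE hE hb this; omega)
  have hcardS : Ss.card = K*q := by
    rw [hSs, card_image_of_injOn, card_range]
    intro a ha b hb' hab
    simp only [mem_coe, mem_range] at ha hb'
    by_contra hne
    rcases Nat.lt_or_ge a b with h | h
    · exact absurd hab (by have := tS_lt_tS hE h hb'; omega)
    · have : b < a := by omega
      exact absurd hab (by have := tS_lt_tS hE this ha; omega)
  have hdisj : Disjoint Es Ss := by
    rw [disjoint_left]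
    rintro a ha hb'
    rw [hEs, mem_image] at ha
    rw [hSs, mem_image] at hb'
    obtain ⟨x, hx, rfl⟩ := ha
    obtain ⟨y, hy, heq⟩ := hb'
    exact tE_ne_tS hE hb x y (mem_range.mp hy) heq.symm
  have hsub : Es ∪ Ss ⊆ range (K*p + K*q) := by
    intro a ha
    rw [mem_union] at ha
    rw [mem_range]
    rcases ha with ha | ha
    · rw [hEs, mem_image] at ha
      obtain ⟨x, hx, rfl⟩ := ha
      exact tE_lt_N (mem_range.mp hx)
    · rw [hSs, mem_image] at ha
      obtain ⟨y, hy, rfl⟩ := ha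
      exact tS_lt_N hE hb (mem_range.mp hy)
  have hcard : (Es ∪ Ss).card = K*p + K*q := by
    rw [card_union_of_disjoint hdisj, hcardE, hcardS]
  have heq : Es ∪ Ss = range (K*p + K*q) :=
    Finset.eq_of_subset_of_card_le hsub (by rw [hcard, card_range])
  have : t ∈ Es ∪ Ss := by rw [heq, mem_range]; exact ht
  rw [mem_union] at this
  rcases this with h | h
  · left
    rw [hEs, mem_image] at h
    obtain ⟨x, hx, hxe⟩ := h
    exact ⟨x, mem_range.mp hx, hxe⟩
  · right
    rw [hSs, mem_image] at h
    obtain ⟨y, hy, hye⟩ := h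
    exact ⟨y, mem_range.mp hy, hye⟩

omit hE hb in
lemma XX_succ (t : ℕ) :
    XX p q K E (t+1) = XX p q K E t + ((range (K*p)).filter fun x => tE q K E x = t).card := by
  classical
  unfold XX
  rw [← card_union_of_disjoint]
  · congr 1
    ext x
    simp only [mem_union, mem_filter, mem_range]
    omega
  · rw [disjoint_left]
    intro a ha ha'
    simp only [mem_filter] at ha ha'
    omega

lemma XX_succ_E {x t : ℕ} (hx : x < K*p) (hxt : tE q K E x = t) :
    XX p q K E (t+1) = XX p q K E t + 1 := by
  classical
  rw [XX_succ]
  congr 1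
  have : ((range (K*p)).filter fun x' => tE q K E x' = t) = {x} := by
    ext a
    simp only [mem_filter, mem_range, mem_singleton]
    constructor
    · rintro ⟨ha, hat⟩
      by_contra hne
      have : tE q K E a ≠ tE q K E x := by
        rcases Nat.lt_or_ge a x with h | h
        · have := tE_lt_tE hE hb h; omega
        · have hlt : x < a := by omega
          have := tE_lt_tE hE hb hlt; omega
      omega
    · rintro rfl
      exact ⟨hx, hxt⟩
  rw [this, card_singleton]

omit hE hb in
lemma XX_succ_S {t : ℕ} (hne : ∀ x < K*p, tE q K E x ≠ t) :
    XX p q K E (t+1) = XX p q K E t := by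
  classical
  rw [XX_succ]
  have : ((range (K*p)).filter fun x' => tE q K E x' = t) = ∅ := by
    ext a
    simp only [mem_filter, mem_range, notMem_empty, iff_false, not_and]
    exact hne a
  rw [this, card_empty, add_zero]

lemma dd_succ_E {x t : ℕ} (hx : x < K*p) (hxt : tE q K E x = t) :
    dd p q K E (t+1) = dd p q K E t + q := by
  unfold dd
  rw [XX_succ_E hE hb hx hxt]
  push_cast
  ring

omit hE hb in
lemma dd_succ_S {t : ℕ} (hne : ∀ x < K*p, tE q K E x ≠ t) :
    dd p q K E (t+1) = dd p q K E t - p := by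
  unfold dd
  rw [XX_succ_S hne]
  push_cast
  ring

lemma XX_tE {x : ℕ} (hx : x < K*p) : XX p q K E (tE q K E x) = x := by
  unfold XX
  have : ((range (K*p)).filter fun x' => tE q K E x' < tE q K E x) = range x := by
    ext a
    simp only [mem_filter, mem_range]
    rw [tE_lt_iff hE hb]
    omega
  rw [this, card_range]

lemma dd_tE {x : ℕ} (hx : x < K*p) : dd p q K E (tE q K E x) = q*x + p*(col E x) := by
  unfold dd
  rw [XX_tE hE hb hx]
  unfold tE
  have h1 := colE_le hE hb x
  have h2 : ((x + (K*q - col E x) : ℕ) : ℤ) = x + K*q - col E x := by omega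
  rw [h2]
  push_cast
  ring

lemma XX_tS {y : ℕ} (hy : y < K*q) : XX p q K E (tS q K E y) = row E y := by
  unfold XX
  have : ((range (K*p)).filter fun x' => tE q K E x' < tS q K E y) = range (row E y) := by
    ext a
    simp only [mem_filter, mem_range]
    have h1 := colE_le hE hb a
    have h2 := rowE_le hE hb y
    constructor
    · rintro ⟨ha, hlt⟩
      by_contra hc
      push_neg at hc
      have hnm : (a, y) ∉ E := fun h => by have := (mem_row_iff hE a y).1 h; omega
      have h3 : ¬ y < col E a := fun h => hnm ((mem_col_iff hE a y).2 h)
      unfold tE tS at hlt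
      omega
    · intro ha
      have hm : (a, y) ∈ E := (mem_row_iff hE a y).2 ha
      have h3 := (mem_col_iff hE a y).1 hm
      have h4 : a < K*p := (hb _ hm).1
      refine ⟨h4, ?_⟩
      unfold tE tS
      omega
  rw [this, card_range]

lemma dd_tS {y : ℕ} (hy : y < K*q) : dd p q K E (tS q K E y) = q*(row E y) + p*(y+1) := by
  unfold dd
  rw [XX_tS hE hb hy]
  unfold tS
  have h2 : ((row E y + (K*q - 1 - y) : ℕ) : ℤ) = row E y + K*q - 1 - y := by omega
  rw [h2]
  push_cast
  ring

omit hE hb in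
lemma dd_zero : dd p q K E 0 = p*(K*q) := by
  unfold dd XX
  have : ((range (K*p)).filter fun x => tE q K E x < 0) = ∅ := by
    ext a; simp
  rw [this]
  simp

omit hE hb in
lemma dd_N : dd p q K E (K*p + K*q) = q*(K*p) := by
  unfold dd XX
  have : ((range (K*p)).filter fun x => tE q K E x < K*p + K*q) = range (K*p) := by
    ext a
    simp only [mem_filter, mem_range, and_iff_left_iff_imp]
    intro ha
    exact tE_lt_N ha
  rw [this, card_range]
  push_cast
  ring

end Path
end GMaux

namespace GMaux
open Finset

lemma crossing (f : ℕ → ℤ) (L : ℤ) (a b : ℕ) (hab : a ≤ b) :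
    ((((Ico a b).filter fun t => f t ≤ L ∧ L < f (t+1))).card : ℤ)
      + (if f b ≤ L then 1 else 0)
    = ((((Ico a b).filter fun t => f (t+1) ≤ L ∧ L < f t)).card : ℤ)
      + (if f a ≤ L then 1 else 0) := by
  classical
  induction b, hab using Nat.le_induction with
  | base => simp
  | succ n hn ih =>
    have hni : n ∉ Ico a n := by simp
    rw [Nat.Ico_succ_right_eq_insert_Ico hn, filter_insert, filter_insert]
    by_cases h1 : f n ≤ L <;> by_cases h2 : f (n+1) ≤ L
    · have hup : ¬(f n ≤ L ∧ L < f (n+1)) := by rintro ⟨u, v⟩; omega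
      have hdn : ¬(f (n+1) ≤ L ∧ L < f n) := by rintro ⟨u, v⟩; omega
      rw [if_neg hup, if_neg hdn, if_pos h2]
      rw [if_pos h1] at ih
      exact ih
    · have hup : f n ≤ L ∧ L < f (n+1) := ⟨h1, by omega⟩
      
      rw [if_pos hup, if_neg (fun hc : f (n+1) ≤ L ∧ L < f n => absurd hc.1 h2),
          card_insert_of_notMem (fun hc => hni (mem_of_mem_filter n hc)), if_neg h2]
      rw [if_pos h1] at ih
      push_cast
      linarith
    · have hdn : f (n+1) ≤ L ∧ L < f n := ⟨h2, by omega⟩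
      rw [if_neg (fun hc : f n ≤ L ∧ L < f (n+1) => absurd hc.1 h1), if_pos hdn,
          card_insert_of_notMem (fun hc => hni (mem_of_mem_filter n hc)), if_pos h2]
      rw [if_neg h1] at ih
      push_cast
      linarith
    · rw [if_neg (fun hc : f n ≤ L ∧ L < f (n+1) => absurd hc.1 h1),
          if_neg (fun hc : f (n+1) ≤ L ∧ L < f n => absurd hc.1 h2), if_neg h2]
      rw [if_neg h1] at ih
      exact ih

end GMaux
namespace GMaux
open Finset

section Path2

variable {p q K : ℕ} {E : Finset (ℕ × ℕ)}
variable (hE : IsYoung E) (hb : ∀ c ∈ E, c.1 < K*p ∧ c.2 < K*q)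

include hE hb

lemma up_count (a b : ℕ) (hbN : b ≤ K*p + K*q) (L : ℤ) :
    ((Ico a b).filter fun t => dd p q K E t ≤ L ∧ L < dd p q K E (t+1)).card
    = ((range (K*p)).filter fun x => a ≤ tE q K E x ∧ tE q K E x < b ∧
        dd p q K E (tE q K E x) ≤ L ∧ L < dd p q K E (tE q K E x) + q).card := by
  classical
  refine (Finset.card_bij (fun x _ => tE q K E x) ?_ ?_ ?_).symm
  · intro x hx
    simp only [mem_filter, mem_range] at hx
    simp only [mem_filter, mem_Ico]
    obtain ⟨hx1, hx2, hx3, hx4, hx5⟩ := hx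
    refine ⟨⟨hx2, hx3⟩, hx4, ?_⟩
    rw [dd_succ_E hE hb hx1 rfl]
    exact hx5
  · intro x hx x' hx' heq
    have heq' : tE q K E x = tE q K E x' := heq
    simp only [mem_filter, mem_range] at hx hx'
    by_contra hne
    rcases Nat.lt_or_ge x x' with h | h
    · have := tE_lt_tE hE hb h; omega
    · have hlt : x' < x := by omega
      have := tE_lt_tE hE hb hlt; omega
  · intro t ht
    simp only [mem_filter, mem_Ico] at ht
    obtain ⟨⟨ht1, ht2⟩, ht3, ht4⟩ := ht
    have htN : t < K*p + K*q := lt_of_lt_of_le ht2 hbN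
    rcases cover hE hb htN with ⟨x, hx, hxe⟩ | ⟨y, hy, hye⟩
    · refine ⟨x, ?_, hxe⟩
      simp only [mem_filter, mem_range]
      rw [hxe]
      refine ⟨hx, ht1, ht2, ht3, ?_⟩
      rw [← dd_succ_E hE hb hx hxe]
      exact ht4
    · exfalso
      have hne : ∀ x < K*p, tE q K E x ≠ t := fun x _ h => tE_ne_tS hE hb x y hy (h.trans hye.symm)
      have := dd_succ_S (E := E) (p := p) hne
      have hq0 : (0:ℤ) ≤ p := by positivity
      omega

lemma down_count (a b : ℕ) (hbN : b ≤ K*p + K*q) (L : ℤ) :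
    ((Ico a b).filter fun t => dd p q K E (t+1) ≤ L ∧ L < dd p q K E t).card
    = ((range (K*q)).filter fun y => a ≤ tS q K E y ∧ tS q K E y < b ∧
        dd p q K E (tS q K E y) - p ≤ L ∧ L < dd p q K E (tS q K E y)).card := by
  classical
  refine (Finset.card_bij (fun y _ => tS q K E y) ?_ ?_ ?_).symm
  · intro y hy
    simp only [mem_filter, mem_range] at hy
    simp only [mem_filter, mem_Ico]
    obtain ⟨hy1, hy2, hy3, hy4, hy5⟩ := hy
    have hne : ∀ x < K*p, tE q K E x ≠ tS q K E y := fun x _ h => tE_ne_tS hE hb x y hy1 h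
    refine ⟨⟨hy2, hy3⟩, ?_, hy5⟩
    rw [dd_succ_S (E := E) (p := p) hne]
    exact hy4
  · intro y hy y' hy' heq
    have heq' : tS q K E y = tS q K E y' := heq
    simp only [mem_filter, mem_range] at hy hy'
    by_contra hne
    rcases Nat.lt_or_ge y y' with h | h
    · have := tS_lt_tS hE h hy'.1; omega
    · have hlt : y' < y := by omega
      have := tS_lt_tS hE hlt hy.1; omega
  · intro t ht
    simp only [mem_filter, mem_Ico] at ht
    obtain ⟨⟨ht1, ht2⟩, ht3, ht4⟩ := ht
    have htN : t < K*p + K*q := lt_of_lt_of_le ht2 hbN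
    rcases cover hE hb htN with ⟨x, hx, hxe⟩ | ⟨y, hy, hye⟩
    · exfalso
      have := dd_succ_E hE hb hx hxe
      have hq0 : (0:ℤ) ≤ q := by positivity
      omega
    · refine ⟨y, ?_, hye⟩
      simp only [mem_filter, mem_range]
      rw [hye]
      have hne : ∀ x < K*p, tE q K E x ≠ t := fun x _ h => tE_ne_tS hE hb x y hy (h.trans hye.symm)
      refine ⟨hy, ht1, ht2, ?_, ht4⟩
      rw [← dd_succ_S (E := E) (p := p) hne]
      exact ht3

end Path2
end GMaux
namespace GMaux
open Finset

section Cross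

variable {p q K : ℕ} {E : Finset (ℕ × ℕ)}
variable (hE : IsYoung E) (hb : ∀ c ∈ E, c.1 < K*p ∧ c.2 < K*q)
variable {x₀ y₀ : ℕ}

include hE hb

lemma tE_le_tS_iff (hy0 : y₀ < K*q) (hrow : row E y₀ = x₀) (hcol : col E x₀ = y₀)
    {y : ℕ} (hy : y < K*q) :
    tE q K E x₀ ≤ tS q K E y ↔ y < y₀ := by
  have hcle := colE_le hE hb x₀
  constructor
  · intro h
    by_contra hc
    push_neg at hc
    rcases hc.lt_or_eq with h' | h'
    · -- y₀ < y : row E y ≤ x₀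
      have hnm : (x₀, y) ∉ E := fun hm => by
        have := (mem_col_iff hE x₀ y).1 hm; omega
      have h2 : ¬ x₀ < row E y := fun h2 => hnm ((mem_row_iff hE x₀ y).2 h2)
      unfold tE tS at h
      omega
    · -- y = y₀
      subst h'
      unfold tE tS at h
      omega
  · intro h
    have hm : (x₀, y) ∈ E := (mem_col_iff hE x₀ y).2 (by omega)
    have h2 := (mem_row_iff hE x₀ y).1 hm
    unfold tE tS
    omega

lemma cross_A (hp : 0 < p) (hq : 0 < q)
    (hx0 : x₀ < K*p) (hy0 : y₀ < K*q)
    (hrow : row E y₀ = x₀) (hcol : col E x₀ = y₀)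
    (hw : q*x₀ + p*y₀ + p + q ≤ K*p*q) :
    ((range (K*q)).filter fun y => y < y₀ ∧
        q*x₀ + p*y₀ + 1 ≤ q*(row E y) + p*y + p ∧
        q*(row E y) + p*y + p ≤ q*x₀ + p*y₀ + p).card
    = ((range (K*p)).filter fun x => x₀ < x ∧
        q*x₀ + p*y₀ < q*x + p*(col E x) + q ∧
        q*x + p*(col E x) ≤ q*x₀ + p*y₀).card := by
  classical
  set N := K*p + K*q with hN
  set m := tE q K E x₀ with hm
  set L : ℤ := ((q*x₀ + p*y₀ : ℕ) : ℤ) with hL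
  have hmN : m ≤ N := (tE_lt_N hx0).le
  have hcross := crossing (dd p q K E) L m N hmN
  have hdm : dd p q K E m = L := by
    rw [hm, dd_tE hE hb hx0, hcol, hL]; push_cast; ring
  have hnotN : ¬ (dd p q K E N ≤ L) := by
    rw [hN, dd_N, hL]
    intro hcon
    have hwz : ((q*x₀ + p*y₀ + p + q : ℕ) : ℤ) ≤ ((K*p*q : ℕ) : ℤ) := Nat.cast_le.mpr hw
    push_cast at hcon hwz
    have hpz : (0:ℤ) < p := by exact_mod_cast hp
    have hqz : (0:ℤ) < q := by exact_mod_cast hq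
    nlinarith
  rw [if_neg hnotN, if_pos (le_of_eq hdm)] at hcross
  rw [up_count hE hb m N le_rfl L, down_count hE hb m N le_rfl L] at hcross
  have hup : ((range (K*p)).filter fun x => m ≤ tE q K E x ∧ tE q K E x < N ∧
      dd p q K E (tE q K E x) ≤ L ∧ L < dd p q K E (tE q K E x) + q)
      = insert x₀ ((range (K*p)).filter fun x => x₀ < x ∧
        q*x₀ + p*y₀ < q*x + p*(col E x) + q ∧ q*x + p*(col E x) ≤ q*x₀ + p*y₀) := by
    ext a
    simp only [mem_insert, mem_filter, mem_range]
    constructor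
    · rintro ⟨ha, h0, h1, h2, h3⟩
      rw [dd_tE hE hb ha, hL] at h2 h3
      have h0' : x₀ ≤ a := by
        by_contra hc
        push_neg at hc
        have := tE_lt_tE hE hb hc
        omega
      rcases h0'.lt_or_eq with h' | h'
      · right
        refine ⟨ha, h', ?_, ?_⟩
        · have : ((q*x₀+p*y₀ : ℕ):ℤ) < ((q*a + p*(col E a) + q : ℕ):ℤ) := by
            push_cast; push_cast at h3; linarith
          exact_mod_cast this
        · have : ((q*a + p*(col E a) : ℕ):ℤ) ≤ ((q*x₀+p*y₀ : ℕ):ℤ) := by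
            push_cast; push_cast at h2; linarith
          exact_mod_cast this
      · left; omega
    · intro h
      rcases h with rfl | ⟨ha, h1, h2, h3⟩
      · refine ⟨hx0, le_rfl, tE_lt_N hx0, ?_, ?_⟩
        · rw [dd_tE hE hb hx0, hcol, hL]; push_cast; linarith
        · rw [dd_tE hE hb hx0, hcol, hL]; push_cast
          have hqz : (0:ℤ) < q := by exact_mod_cast hq
          linarith
      · have hle : m ≤ tE q K E a := (tE_lt_tE hE hb h1).le
        refine ⟨ha, hle, tE_lt_N ha, ?_, ?_⟩ <;> rw [dd_tE hE hb ha, hL]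
        · have := (Nat.cast_le (α := ℤ)).mpr h3; push_cast at this; push_cast; linarith
        · have := (Nat.cast_lt (α := ℤ)).mpr h2; push_cast at this; push_cast; linarith
  have hdown : ((range (K*q)).filter fun y => m ≤ tS q K E y ∧ tS q K E y < N ∧
      dd p q K E (tS q K E y) - p ≤ L ∧ L < dd p q K E (tS q K E y))
      = ((range (K*q)).filter fun y => y < y₀ ∧
        q*x₀ + p*y₀ + 1 ≤ q*(row E y) + p*y + p ∧
        q*(row E y) + p*y + p ≤ q*x₀ + p*y₀ + p) := by
    apply filter_congr
    intro y hy
    rw [mem_range] at hy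
    rw [dd_tS hE hb hy, tE_le_tS_iff hE hb hy0 hrow hcol hy, hL]
    constructor
    · rintro ⟨h1, _, h3, h4⟩
      refine ⟨h1, ?_, ?_⟩
      · have : ((q*x₀+p*y₀+1 : ℕ):ℤ) ≤ ((q*(row E y) + p*y + p : ℕ):ℤ) := by
          push_cast; push_cast at h4; linarith
        exact_mod_cast this
      · have : ((q*(row E y) + p*y + p : ℕ):ℤ) ≤ ((q*x₀+p*y₀+p : ℕ):ℤ) := by
          push_cast; push_cast at h3; linarith
        exact_mod_cast this
    · rintro ⟨h1, h3, h4⟩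
      refine ⟨h1, tS_lt_N hE hb hy, ?_, ?_⟩
      · have := (Nat.cast_le (α := ℤ)).mpr h4; push_cast at this; push_cast; linarith
      · have := (Nat.cast_le (α := ℤ)).mpr h3; push_cast at this; push_cast; linarith
  rw [hup, hdown, card_insert_of_notMem (by simp)] at hcross
  push_cast at hcross
  omega

lemma cross_B (hp : 0 < p) (hq : 0 < q)
    (hx0 : x₀ < K*p) (hy0 : y₀ < K*q)
    (hrow : row E y₀ = x₀) (hcol : col E x₀ = y₀)
    (hw : q*x₀ + p*y₀ + p + q ≤ K*p*q) :
    ((range (K*q)).filter fun y => y₀ < y ∧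
        q*x₀ + p*y₀ + p + q ≤ q*(row E y) + p*y + p ∧
        q*(row E y) + p*y + p < q*x₀ + p*y₀ + 2*p + q).card
    = 1 + ((range (K*p)).filter fun x => x < x₀ ∧
        q*x₀ + p*y₀ + p ≤ q*x + p*(col E x) ∧
        q*x + p*(col E x) < q*x₀ + p*y₀ + p + q).card := by
  classical
  set N := K*p + K*q with hN
  set m := tE q K E x₀ with hm
  set L : ℤ := ((q*x₀ + p*y₀ + p + q : ℕ) : ℤ) - 1 with hL
  have hmN : m ≤ N := (tE_lt_N hx0).le
  have hcross := crossing (dd p q K E) L 0 m (Nat.zero_le m)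
  have hdm : dd p q K E m ≤ L := by
    rw [hm, dd_tE hE hb hx0, hcol, hL]
    push_cast
    have hpz : (0:ℤ) < p := by exact_mod_cast hp
    have hqz : (0:ℤ) < q := by exact_mod_cast hq
    linarith
  have hnot0 : ¬ (dd p q K E 0 ≤ L) := by
    rw [dd_zero, hL]
    intro hcon
    have hwz : ((q*x₀ + p*y₀ + p + q : ℕ) : ℤ) ≤ ((K*p*q : ℕ) : ℤ) := Nat.cast_le.mpr hw
    push_cast at hcon hwz
    nlinarith
  rw [if_pos hdm, if_neg hnot0] at hcross
  rw [up_count hE hb 0 m hmN L, down_count hE hb 0 m hmN L] at hcross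
  have hup : ((range (K*p)).filter fun x => 0 ≤ tE q K E x ∧ tE q K E x < m ∧
      dd p q K E (tE q K E x) ≤ L ∧ L < dd p q K E (tE q K E x) + q)
      = ((range (K*p)).filter fun x => x < x₀ ∧
        q*x₀ + p*y₀ + p ≤ q*x + p*(col E x) ∧
        q*x + p*(col E x) < q*x₀ + p*y₀ + p + q) := by
    apply filter_congr
    intro a ha
    rw [mem_range] at ha
    rw [dd_tE hE hb ha, hL]
    have hlt_iff : tE q K E a < m ↔ a < x₀ := tE_lt_iff hE hb
    rw [hm, hlt_iff]
    constructor
    · rintro ⟨_, h1, h2, h3⟩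
      refine ⟨h1, ?_, ?_⟩
      · have : ((q*x₀+p*y₀+p : ℕ):ℤ) ≤ ((q*a + p*(col E a) : ℕ):ℤ) := by
          push_cast; push_cast at h3; linarith
        exact_mod_cast this
      · have : ((q*a + p*(col E a) : ℕ):ℤ) < ((q*x₀+p*y₀+p+q : ℕ):ℤ) := by
          push_cast; push_cast at h2; linarith
        exact_mod_cast this
    · rintro ⟨h1, h2, h3⟩
      refine ⟨Nat.zero_le _, h1, ?_, ?_⟩
      · have := (Nat.cast_lt (α := ℤ)).mpr h3; push_cast at this; push_cast; linarith
      · have := (Nat.cast_le (α := ℤ)).mpr h2; push_cast at this; push_cast; linarith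
  have hdown : ((range (K*q)).filter fun y => 0 ≤ tS q K E y ∧ tS q K E y < m ∧
      dd p q K E (tS q K E y) - p ≤ L ∧ L < dd p q K E (tS q K E y))
      = ((range (K*q)).filter fun y => y₀ < y ∧
        q*x₀ + p*y₀ + p + q ≤ q*(row E y) + p*y + p ∧
        q*(row E y) + p*y + p < q*x₀ + p*y₀ + 2*p + q) := by
    apply filter_congr
    intro y hy
    rw [mem_range] at hy
    have hlt_iff : tS q K E y < m ↔ ¬ (y < y₀) := by
      rw [← tE_le_tS_iff hE hb hy0 hrow hcol hy, hm]; omega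
    rw [dd_tS hE hb hy, hL, hlt_iff]
    constructor
    · rintro ⟨_, h1, h2, h3⟩
      have hwin1 : q*x₀ + p*y₀ + p + q ≤ q*(row E y) + p*y + p := by
        have : ((q*x₀+p*y₀+p+q : ℕ):ℤ) ≤ ((q*(row E y) + p*y + p : ℕ):ℤ) := by
          push_cast; push_cast at h3; linarith
        exact_mod_cast this
      have hwin2 : q*(row E y) + p*y + p < q*x₀ + p*y₀ + 2*p + q := by
        have : ((q*(row E y) + p*y + p : ℕ):ℤ) < ((q*x₀+p*y₀+2*p+q : ℕ):ℤ) := by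
          push_cast; push_cast at h2; linarith
        exact_mod_cast this
      refine ⟨?_, hwin1, hwin2⟩
      by_contra hc
      push_neg at hc
      have hyy : y = y₀ := by omega
      subst hyy
      rw [hrow] at hwin1
      omega
    · rintro ⟨h1, h2, h3⟩
      refine ⟨Nat.zero_le _, by omega, ?_, ?_⟩
      · have := (Nat.cast_lt (α := ℤ)).mpr h3; push_cast at this; push_cast; linarith
      · have := (Nat.cast_le (α := ℤ)).mpr h2; push_cast at this; push_cast; linarith
  rw [hup, hdown] at hcross
  push_cast at hcross
  omega

end Cross
end GMaux
namespace GMaux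
open Finset

section Windows

lemma winB {p q x₀ y₀ l y : ℕ} (hl : x₀ < l) (hy : y < y₀) :
    (q*(l - x₀) ≤ p*(y₀ - y) ∧ ¬(q*(l - x₀) ≤ p*(y₀ - y - 1))) ↔
      (q*x₀ + p*y₀ + 1 ≤ q*l + p*y + p ∧ q*l + p*y + p ≤ q*x₀ + p*y₀ + p) := by
  have c1 : x₀ ≤ l := hl.le
  have c2 : (1:ℕ) ≤ y₀ - y := by omega
  have c3 : y ≤ y₀ := hy.le
  zify [c1, c2, c3]
  constructor
  · rintro ⟨h1, h2⟩
    rw [not_le] at h2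
    constructor <;> nlinarith
  · rintro ⟨h1, h2⟩
    refine ⟨by nlinarith, ?_⟩
    rw [not_le]
    nlinarith

lemma winC {p q x₀ y₀ l y : ℕ} (hl : l ≤ x₀) (hy : y₀ < y) :
    (q*(x₀ - l + 1) ≤ p*(y - y₀) ∧ ¬(q*(x₀ - l + 1) ≤ p*(y - y₀ - 1))) ↔
      (q*x₀ + p*y₀ + p + q ≤ q*l + p*y + p ∧ q*l + p*y + p < q*x₀ + p*y₀ + 2*p + q) := by
  have c2 : (1:ℕ) ≤ y - y₀ := by omega
  have c3 : y₀ ≤ y := hy.le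
  zify [hl, c2, c3]
  constructor
  · rintro ⟨h1, h2⟩
    rw [not_le] at h2
    constructor <;> nlinarith
  · rintro ⟨h1, h2⟩
    refine ⟨by nlinarith, ?_⟩
    rw [not_le]
    nlinarith

lemma winD {p q x₀ y₀ x m : ℕ} (hx : x < x₀) (hm : y₀ < m) :
    (q*(x₀ - x) ≤ p*(m - y₀ - 1) ∧ ¬(q*(x₀ - x + 1) ≤ p*(m - y₀ - 1))) ↔
      (q*x₀ + p*y₀ + p ≤ q*x + p*m ∧ q*x + p*m < q*x₀ + p*y₀ + p + q) := by
  have c1 : x ≤ x₀ := hx.le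
  have c2 : (1:ℕ) ≤ m - y₀ := by omega
  have c3 : y₀ ≤ m := hm.le
  zify [c1, c2, c3]
  constructor
  · rintro ⟨h1, h2⟩
    rw [not_le] at h2
    constructor <;> nlinarith
  · rintro ⟨h1, h2⟩
    refine ⟨by nlinarith, ?_⟩
    rw [not_le]
    nlinarith

lemma winE {p q x₀ y₀ x m : ℕ} (hx : x₀ < x) (hm : m ≤ y₀) :
    (q*(x - x₀) ≤ p*(y₀ - m) ∧ ¬(q*(x - x₀ + 1) ≤ p*(y₀ - m))) ↔
      (q*x₀ + p*y₀ < q*x + p*m + q ∧ q*x + p*m ≤ q*x₀ + p*y₀) := by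
  have c1 : x₀ ≤ x := hx.le
  zify [c1, hm]
  constructor
  · rintro ⟨h1, h2⟩
    rw [not_le] at h2
    constructor <;> nlinarith
  · rintro ⟨h1, h2⟩
    refine ⟨by nlinarith, ?_⟩
    rw [not_le]
    nlinarith

lemma ite_diff1 {A A' W : Prop} [Decidable A] [Decidable A'] [Decidable W]
    (himp : A' → A) (hiff : W ↔ (A ∧ ¬ A')) :
    ((if ¬A then (1:ℤ) else 0) - (if ¬A' then 1 else 0)) = -(if W then 1 else 0) := by
  by_cases hA : A <;> by_cases hA' : A'
  · simp [hA, hA', hiff]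
  · simp [hA, hA', hiff]
  · exact absurd (himp hA') hA
  · simp [hA, hA', hiff]

lemma ite_diff2 {A A' W : Prop} [Decidable A] [Decidable A'] [Decidable W]
    (himp : A → A') (hiff : W ↔ (A' ∧ ¬ A)) :
    ((if A then (1:ℤ) else 0) - (if A' then 1 else 0)) = -(if W then 1 else 0) := by
  by_cases hA : A <;> by_cases hA' : A' <;> simp [hA, hA', hiff]
  · exact hA' (himp hA)

lemma ite_diff3 {A A' W : Prop} [Decidable A] [Decidable A'] [Decidable W]
    (himp : A → A') (hiff : W ↔ (A' ∧ ¬ A)) :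
    ((if ¬A then (1:ℤ) else 0) - (if ¬A' then 1 else 0)) = (if W then 1 else 0) := by
  by_cases hA : A <;> by_cases hA' : A' <;> simp [hA, hA', hiff]
  · exact hA' (himp hA)

lemma ite_diff4 {A A' W : Prop} [Decidable A] [Decidable A'] [Decidable W]
    (himp : A' → A) (hiff : W ↔ (A ∧ ¬ A')) :
    ((if A then (1:ℤ) else 0) - (if A' then 1 else 0)) = (if W then 1 else 0) := by
  by_cases hA : A <;> by_cases hA' : A'
  · simp [hA, hA', hiff]
  · simp [hA, hA', hiff]
  · exact absurd (himp hA') hA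
  · simp [hA, hA', hiff]

end Windows
end GMaux
namespace GMaux
open Finset

def cnt (p q : ℕ) (D : Finset (ℕ × ℕ)) (c : ℕ × ℕ) : Prop :=
  (c ∈ D ∧ ¬ (q * (arm D c + 1) ≤ p * leg D c)) ∨ (c ∉ D ∧ q * (coArm D c + 1) ≤ p * coLeg D c)

instance cntDec (p q : ℕ) (D : Finset (ℕ × ℕ)) : DecidablePred (cnt p q D) := fun c => by
  unfold cnt; infer_instance

lemma step {p q K : ℕ} (hp : 0 < p) (hq : 0 < q) {D : Finset (ℕ × ℕ)} (hD : IsYoung D)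
    {x₀ y₀ : ℕ} (hc0 : (x₀, y₀) ∈ D)
    (hb : ∀ c ∈ D, c.1 < K*p ∧ c.2 < K*q)
    (hc1 : (x₀+1, y₀) ∉ D) (hc2 : (x₀, y₀+1) ∉ D)
    (hw : q*x₀ + p*y₀ + p + q ≤ K*p*q) :
    (((range (K*p)) ×ˢ (range (K*q))).filter (cnt p q D)).card
      = (((range (K*p)) ×ˢ (range (K*q))).filter (cnt p q (D.erase (x₀, y₀)))).card := by
  classical
  set D' := D.erase (x₀, y₀) with hD'def
  have hsub : D' ⊆ D := erase_subset _ _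
  have hx0 : x₀ < K*p := (hb _ hc0).1
  have hy0 : y₀ < K*q := (hb _ hc0).2
  have hb' : ∀ c ∈ D', c.1 < K*p ∧ c.2 < K*q := fun c hc => hb c (hsub hc)
  have hD'Y : IsYoung D' := by
    intro x y x' y' hxy hx' hy'
    have hxyD : (x, y) ∈ D := hsub hxy
    have hmD : (x', y') ∈ D := hD x y x' y' hxyD hx' hy'
    rw [hD'def, mem_erase] at hxy ⊢
    refine ⟨?_, hmD⟩
    intro heq
    rw [Prod.mk.injEq] at heq
    obtain ⟨h1, h2⟩ := heq
    rcases Nat.lt_or_ge x₀ x with h | h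
    · exact hc1 (hD x y (x₀+1) y₀ hxyD (by omega) (by omega))
    · rcases Nat.lt_or_ge y₀ y with h3 | h3
      · exact hc2 (hD x y x₀ (y₀+1) hxyD (by omega) (by omega))
      · refine hxy.1 ?_
        rw [Prod.mk.injEq]
        omega
  have hrowD0 : row D y₀ = x₀ + 1 := by
    have h1 := (mem_row_iff hD x₀ y₀).1 hc0
    have h2 : ¬ (x₀ + 1 < row D y₀) := fun h => hc1 ((mem_row_iff hD _ _).2 h)
    omega
  have hcolD0 : col D x₀ = y₀ + 1 := by
    have h1 := (mem_col_iff hD x₀ y₀).1 hc0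
    have h2 : ¬ (y₀ + 1 < col D x₀) := fun h => hc2 ((mem_col_iff hD _ _).2 h)
    omega
  have hrow' : ∀ y, row D' y = if y = y₀ then x₀ else row D y := by
    intro y
    rw [hD'def, row, filter_erase]
    by_cases hy : y = y₀
    · subst hy
      have hcm : (x₀, y) ∈ D.filter (fun c => c.2 = y) := mem_filter.mpr ⟨hc0, rfl⟩
      rw [if_pos rfl, card_erase_of_mem hcm,
          show (D.filter fun c => c.2 = y).card = row D y from rfl, hrowD0]
      omega
    · rw [if_neg hy, erase_eq_of_notMem, ← row]
      intro hc
      exact hy ((mem_filter.mp hc).2 : (x₀, y₀).2 = y).symm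
  have hcol' : ∀ x, col D' x = if x = x₀ then y₀ else col D x := by
    intro x
    rw [hD'def, col, filter_erase]
    by_cases hx : x = x₀
    · subst hx
      have hcm : (x, y₀) ∈ D.filter (fun c => c.1 = x) := mem_filter.mpr ⟨hc0, rfl⟩
      rw [if_pos rfl, card_erase_of_mem hcm,
          show (D.filter fun c => c.1 = x).card = col D x from rfl, hcolD0]
      omega
    · rw [if_neg hx, erase_eq_of_notMem, ← col]
      intro hc
      exact hx ((mem_filter.mp hc).2 : (x₀, y₀).1 = x).symm
  have hrow'0 : row D' y₀ = x₀ := by rw [hrow' y₀, if_pos rfl]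
  have hcol'0 : col D' x₀ = y₀ := by rw [hcol' x₀, if_pos rfl]
  set Lcol := ((range (K*q)).filter fun y => y < y₀ ∧
      q*x₀ + p*y₀ + 1 ≤ q*(row D' y) + p*y + p ∧
      q*(row D' y) + p*y + p ≤ q*x₀ + p*y₀ + p) with hLcol
  set Lup := ((range (K*q)).filter fun y => y₀ < y ∧
      q*x₀ + p*y₀ + p + q ≤ q*(row D' y) + p*y + p ∧
      q*(row D' y) + p*y + p < q*x₀ + p*y₀ + 2*p + q) with hLup
  set Grow := ((range (K*p)).filter fun x => x < x₀ ∧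
      q*x₀ + p*y₀ + p ≤ q*x + p*(col D' x) ∧
      q*x + p*(col D' x) < q*x₀ + p*y₀ + p + q) with hGrow
  set Gright := ((range (K*p)).filter fun x => x₀ < x ∧
      q*x₀ + p*y₀ < q*x + p*(col D' x) + q ∧
      q*x + p*(col D' x) ≤ q*x₀ + p*y₀) with hGright
  have hcrossA : Lcol.card = Gright.card :=
    cross_A hD'Y hb' hp hq hx0 hy0 hrow'0 hcol'0 hw
  have hcrossB : Lup.card = 1 + Grow.card :=
    cross_B hD'Y hb' hp hq hx0 hy0 hrow'0 hcol'0 hw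
  have hsb : ∀ S : Finset (ℕ × ℕ),
      ((((range (K*p)) ×ˢ (range (K*q))).filter (cnt p q S)).card : ℤ)
      = ∑ c ∈ (range (K*p)) ×ˢ (range (K*q)), (if cnt p q S c then (1:ℤ) else 0) := by
    intro S
    rw [Finset.sum_boole]
  suffices hkey : ∑ c ∈ (range (K*p)) ×ˢ (range (K*q)),
      ((if cnt p q D c then (1:ℤ) else 0) - (if cnt p q D' c then (1:ℤ) else 0)) = 0 by
    have h1 := hsb D
    have h2 := hsb D'
    rw [sum_sub_distrib] at hkey
    omega
  rw [Finset.sum_product]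
  have hinner : ∀ x ∈ range (K*p),
      (∑ y ∈ range (K*q), ((if cnt p q D (x, y) then (1:ℤ) else 0)
          - (if cnt p q D' (x, y) then (1:ℤ) else 0)))
      = (if x = x₀ then (1:ℤ) - (Lcol.card : ℤ) - (Lup.card : ℤ) else 0)
        + ((if x < x₀ ∧ q*x₀ + p*y₀ + p ≤ q*x + p*(col D' x) ∧
              q*x + p*(col D' x) < q*x₀ + p*y₀ + p + q then (1:ℤ) else 0)
          + (if x₀ < x ∧ q*x₀ + p*y₀ < q*x + p*(col D' x) + q ∧
              q*x + p*(col D' x) ≤ q*x₀ + p*y₀ then (1:ℤ) else 0)) := by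
    intro x hx
    rw [mem_range] at hx
    by_cases hxx : x = x₀
    · subst hxx
      rw [if_pos rfl]
      simp only [lt_irrefl, false_and, if_false, add_zero]
      have colpt : ∀ y ∈ range (K*q),
          ((if cnt p q D (x, y) then (1:ℤ) else 0) - (if cnt p q D' (x, y) then (1:ℤ) else 0))
          = (if y = y₀ then (1:ℤ) else 0)
            - (if y < y₀ ∧ q*x + p*y₀ + 1 ≤ q*(row D' y) + p*y + p ∧
                q*(row D' y) + p*y + p ≤ q*x + p*y₀ + p then (1:ℤ) else 0)
            - (if y₀ < y ∧ q*x + p*y₀ + p + q ≤ q*(row D' y) + p*y + p ∧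
                q*(row D' y) + p*y + p < q*x + p*y₀ + 2*p + q then (1:ℤ) else 0) := by
        intro y hy
        rw [mem_range] at hy
        rcases lt_trichotomy y y₀ with hlt | heq | hgt
        · -- region B : y < y₀, cell in both diagrams
          have hmem : (x, y) ∈ D := hD x y₀ x y hc0 le_rfl hlt.le
          have hmem' : (x, y) ∈ D' := by
            rw [hD'def, mem_erase]
            refine ⟨fun hc => ?_, hmem⟩
            rw [Prod.mk.injEq] at hc
            omega
          have hlrow : x < row D y := (mem_row_iff hD _ _).1 hmem
          have hrD' : row D' y = row D y := by rw [hrow' y, if_neg (by omega)]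
          have e1 : arm D (x, y) + 1 = row D' y - x := by
            rw [arm_eq hD]; omega
          have e2 : leg D (x, y) = y₀ - y := by
            rw [leg_eq hD, hcolD0]; omega
          have e3 : arm D' (x, y) + 1 = row D' y - x := by
            rw [arm_eq hD'Y]; omega
          have e4 : leg D' (x, y) = y₀ - y - 1 := by
            rw [leg_eq hD'Y, hcol'0]; omega
          have hcA : cnt p q D (x, y) ↔ ¬ (q * (row D' y - x) ≤ p * (y₀ - y)) := by
            simp [cnt, hmem, e1, e2]
          have hcA' : cnt p q D' (x, y) ↔ ¬ (q * (row D' y - x) ≤ p * (y₀ - y - 1)) := by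
            simp [cnt, hmem', e3, e4]
          rw [if_congr hcA rfl rfl, if_congr hcA' rfl rfl]
          simp only [show ¬ (y = y₀) from by omega, show ¬ (y₀ < y) from by omega,
            false_and, if_false, zero_sub, sub_zero, hlt, true_and]
          exact ite_diff1 (fun h => h.trans (Nat.mul_le_mul_left p (by omega)))
            ((winB (by omega) hlt).symm)
        · -- the corner cell itself
          subst heq
          have hnm' : (x, y) ∉ D' := by rw [hD'def]; exact notMem_erase _ _
          have h1 : cnt p q D (x, y) := by
            refine Or.inl ⟨hc0, ?_⟩
            rw [arm_eq hD, leg_eq hD, hrowD0, hcolD0]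
            have e : x + 1 - (x + 1) + 1 = 1 := by omega
            have e' : y + 1 - (y + 1) = 0 := by omega
            rw [e, e']
            omega
          have h2 : ¬ cnt p q D' (x, y) := by
            rintro (⟨hmem, -⟩ | ⟨-, hout⟩)
            · exact hnm' hmem
            · rw [coArm_eq hD'Y (by omega), coLeg_eq hD'Y (by omega), hrow'0, hcol'0] at hout
              have e : x - x = 0 := by omega
              have e' : y - y = 0 := by omega
              rw [e, e'] at hout
              omega
          rw [if_pos h1, if_neg h2, if_pos rfl]
          simp only [lt_irrefl, false_and, if_false]
          ring
        · -- region C : y₀ < y, cell outside both diagrams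
          have hnm : (x, y) ∉ D := fun h => by
            have := (mem_col_iff hD _ _).1 h
            omega
          have hnm' : (x, y) ∉ D' := fun h => hnm (hsub h)
          have hrD' : row D' y = row D y := by rw [hrow' y, if_neg (by omega)]
          have hrle : row D y ≤ x := by
            by_contra hcon
            exact hnm ((mem_row_iff hD _ _).2 (by omega))
          have e1 : coArm D (x, y) + 1 = x - row D' y + 1 := by
            rw [coArm_eq hD hrle]; omega
          have e2 : coLeg D (x, y) = y - y₀ - 1 := by
            rw [coLeg_eq hD (by omega), hcolD0]; omega
          have e3 : coArm D' (x, y) + 1 = x - row D' y + 1 := by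
            rw [coArm_eq hD'Y (by omega)]
          have e4 : coLeg D' (x, y) = y - y₀ := by
            rw [coLeg_eq hD'Y (by omega), hcol'0]
          have hcA : cnt p q D (x, y) ↔ q * (x - row D' y + 1) ≤ p * (y - y₀ - 1) := by
            simp [cnt, hnm, e1, e2]
          have hcA' : cnt p q D' (x, y) ↔ q * (x - row D' y + 1) ≤ p * (y - y₀) := by
            simp [cnt, hnm', e3, e4]
          rw [if_congr hcA rfl rfl, if_congr hcA' rfl rfl]
          simp only [show ¬ (y = y₀) from by omega, show ¬ (y < y₀) from by omega,
            false_and, if_false, zero_sub, sub_zero, hgt, true_and]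
          exact ite_diff2 (fun h => h.trans (Nat.mul_le_mul_left p (by omega)))
            ((winC (by omega) hgt).symm)
      rw [sum_congr rfl colpt, sum_sub_distrib, sum_sub_distrib,
          Finset.sum_ite_eq' (range (K*q)) y₀ (fun _ => (1:ℤ)),
          if_pos (mem_range.mpr hy0), Finset.sum_boole, Finset.sum_boole, ← hLcol, ← hLup]
    · rw [if_neg hxx]
      have hpt : ∀ y ∈ range (K*q),
          ((if cnt p q D (x, y) then (1:ℤ) else 0) - (if cnt p q D' (x, y) then (1:ℤ) else 0))
          = (if y = y₀ then
              ((if x < x₀ ∧ q*x₀ + p*y₀ + p ≤ q*x + p*(col D' x) ∧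
                  q*x + p*(col D' x) < q*x₀ + p*y₀ + p + q then (1:ℤ) else 0)
                + (if x₀ < x ∧ q*x₀ + p*y₀ < q*x + p*(col D' x) + q ∧
                  q*x + p*(col D' x) ≤ q*x₀ + p*y₀ then (1:ℤ) else 0)) else 0) := by
        intro y hy
        rw [mem_range] at hy
        by_cases hyy : y = y₀
        · subst hyy
          rw [if_pos rfl]
          have hcD' : col D' x = col D x := by rw [hcol' x, if_neg hxx]
          rcases Nat.lt_or_ge x x₀ with hxlt | hxge
          · -- region D : x < x₀, in both
            have hmem' : (x, y) ∈ D' := (mem_row_iff hD'Y _ _).2 (by omega)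
            have hmem : (x, y) ∈ D := hsub hmem'
            have hyc : y < col D x := (mem_col_iff hD _ _).1 hmem
            have e1 : arm D (x, y) + 1 = x₀ - x + 1 := by
              rw [arm_eq hD, hrowD0]; omega
            have e2 : leg D (x, y) = col D' x - y - 1 := by
              rw [leg_eq hD, hcD']; omega
            have e3 : arm D' (x, y) + 1 = x₀ - x := by
              rw [arm_eq hD'Y, hrow'0]; omega
            have e4 : leg D' (x, y) = col D' x - y - 1 := by
              rw [leg_eq hD'Y]; omega
            have hcA : cnt p q D (x, y) ↔ ¬ (q * (x₀ - x + 1) ≤ p * (col D' x - y - 1)) := by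
              simp [cnt, hmem, e1, e2]
            have hcA' : cnt p q D' (x, y) ↔ ¬ (q * (x₀ - x) ≤ p * (col D' x - y - 1)) := by
              simp [cnt, hmem', e3, e4]
            rw [if_congr hcA rfl rfl, if_congr hcA' rfl rfl]
            simp only [show ¬ (x₀ < x) from by omega, false_and, if_false, add_zero,
              hxlt, true_and]
            exact ite_diff3 (fun h => le_trans (Nat.mul_le_mul_left q (by omega)) h)
              ((winD hxlt (by omega)).symm)
          · -- region E : x₀ < x, outside both
            have hxgt : x₀ < x := by omega
            have hnm : (x, y) ∉ D := fun h => by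
              have := (mem_row_iff hD _ _).1 h
              omega
            have hnm' : (x, y) ∉ D' := fun h => hnm (hsub h)
            have hmle : col D x ≤ y := by
              by_contra hcon
              exact hnm ((mem_col_iff hD _ _).2 (by omega))
            have e1 : coArm D (x, y) + 1 = x - x₀ := by
              rw [coArm_eq hD (by omega), hrowD0]; omega
            have e2 : coLeg D (x, y) = y - col D' x := by
              rw [coLeg_eq hD hmle, hcD']
            have e3 : coArm D' (x, y) + 1 = x - x₀ + 1 := by
              rw [coArm_eq hD'Y (by omega), hrow'0]
            have e4 : coLeg D' (x, y) = y - col D' x := by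
              rw [coLeg_eq hD'Y (by omega)]
            have hcA : cnt p q D (x, y) ↔ q * (x - x₀) ≤ p * (y - col D' x) := by
              simp [cnt, hnm, e1, e2]
            have hcA' : cnt p q D' (x, y) ↔ q * (x - x₀ + 1) ≤ p * (y - col D' x) := by
              simp [cnt, hnm', e3, e4]
            rw [if_congr hcA rfl rfl, if_congr hcA' rfl rfl]
            simp only [show ¬ (x < x₀) from by omega, false_and, if_false, zero_add,
              hxgt, true_and]
            exact ite_diff4 (fun h => le_trans (Nat.mul_le_mul_left q (by omega)) h)
              ((winE hxgt (by omega)).symm)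
        · -- region F
          rw [if_neg hyy]
          have hne : ∀ a b : ℕ, b = y → ((a, b) ∈ D' ↔ (a, b) ∈ D) := by
            intro a b hb2
            rw [hD'def, mem_erase, and_iff_right_iff_imp]
            intro _ hc
            rw [Prod.mk.injEq] at hc
            omega
          have hne2 : ∀ a b : ℕ, a = x → ((a, b) ∈ D' ↔ (a, b) ∈ D) := by
            intro a b ha
            rw [hD'def, mem_erase, and_iff_right_iff_imp]
            intro _ hc
            rw [Prod.mk.injEq] at hc
            omega
          have hmiff : ((x, y) ∈ D') ↔ ((x, y) ∈ D) := hne x y rfl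
          have harm : arm D' (x, y) = arm D (x, y) := by
            rw [arm_eq hD'Y, arm_eq hD, hrow' y, if_neg hyy]
          have hleg : leg D' (x, y) = leg D (x, y) := by
            rw [leg_eq hD'Y, leg_eq hD, hcol' x, if_neg hxx]
          have hcoa : coArm D' (x, y) = coArm D (x, y) := by
            unfold coArm
            exact congrArg card (filter_congr fun a _ => not_congr (hne a y rfl))
          have hcol2 : coLeg D' (x, y) = coLeg D (x, y) := by
            unfold coLeg
            exact congrArg card (filter_congr fun b _ => not_congr (hne2 x b rfl))
          have hiff : cnt p q D' (x, y) ↔ cnt p q D (x, y) := by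
            unfold cnt
            rw [harm, hleg, hcoa, hcol2, hmiff]
          rw [if_congr hiff rfl rfl, sub_self]
      rw [sum_congr rfl hpt, Finset.sum_ite_eq' (range (K*q)) y₀, if_pos (mem_range.mpr hy0),
          zero_add]
  rw [sum_congr rfl hinner]
  rw [sum_add_distrib, sum_add_distrib,
      Finset.sum_ite_eq' (range (K*p)) x₀ (fun _ => (1:ℤ) - (Lcol.card : ℤ) - (Lup.card : ℤ)),
      if_pos (mem_range.mpr hx0), Finset.sum_boole, Finset.sum_boole, ← hGrow, ← hGright]
  push_cast
  omega

end GMaux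
namespace GMaux
open Finset

lemma base {p q K : ℕ} (hp : 0 < p) (hq : 0 < q) :
    (((range (K*p)) ×ˢ (range (K*q))).filter (cnt p q (∅ : Finset (ℕ × ℕ)))).card
      = (((range (K*p)) ×ˢ (range (K*q))).filter
          (fun c => q*c.1 + p*c.2 + p + q ≤ K*p*q)).card := by
  classical
  have hcnt : ∀ c : ℕ × ℕ, cnt p q (∅ : Finset (ℕ × ℕ)) c ↔ q*(c.1+1) ≤ p*c.2 := by
    rintro ⟨x, y⟩
    simp [cnt, coArm, coLeg]
  rw [filter_congr (fun c _ => hcnt c)]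
  refine Finset.card_bij' (fun c _ => (c.1, K*q - 1 - c.2)) (fun c _ => (c.1, K*q - 1 - c.2))
    ?_ ?_ ?_ ?_
  · rintro ⟨x, y⟩ ha
    simp only [mem_filter, mem_product, mem_range] at ha ⊢
    obtain ⟨⟨hx, hy⟩, hcond⟩ := ha
    have hy1 : 1 ≤ y := by
      rcases Nat.eq_zero_or_pos y with rfl | h
      · have : 0 < q*(x+1) := Nat.mul_pos hq (by omega)
        rw [Nat.mul_zero] at hcond
        omega
      · omega
    have h1 : (K*q - 1 - y) + y + 1 = K*q := by omega
    have e : p*(K*q) = p*(K*q - 1 - y) + p*y + p := by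
      conv_lhs => rw [← h1]
      ring
    have e2 : p*(K*q) = K*p*q := by ring
    have e3 : q*(x+1) = q*x + q := by ring
    exact ⟨⟨hx, by omega⟩, by omega⟩
  · rintro ⟨x, y⟩ ha
    simp only [mem_filter, mem_product, mem_range] at ha ⊢
    obtain ⟨⟨hx, hy⟩, hcond⟩ := ha
    have h1 : (K*q - 1 - y) + y + 1 = K*q := by omega
    have e : p*(K*q) = p*(K*q - 1 - y) + p*y + p := by
      conv_lhs => rw [← h1]
      ring
    have e2 : p*(K*q) = K*p*q := by ring
    have e3 : q*(x+1) = q*x + q := by ring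
    exact ⟨⟨hx, by omega⟩, by omega⟩
  · rintro ⟨x, y⟩ ha
    simp only [mem_filter, mem_product, mem_range] at ha
    dsimp only
    have h2 : K*q - 1 - (K*q - 1 - y) = y := by omega
    rw [h2]
  · rintro ⟨x, y⟩ ha
    simp only [mem_filter, mem_product, mem_range] at ha
    dsimp only
    have h2 : K*q - 1 - (K*q - 1 - y) = y := by omega
    rw [h2]

lemma bounds {p q K : ℕ} (hp : 0 < p) (hq : 0 < q) {D : Finset (ℕ × ℕ)}
    (hdiag : ∀ c ∈ D, q*c.1 + p*c.2 + p + q ≤ K*p*q) :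
    ∀ c ∈ D, c.1 < K*p ∧ c.2 < K*q := by
  intro c hc
  have h := hdiag c hc
  constructor
  · have h1 : q*(c.1+1) < q*(K*p) := by
      have e : q*(K*p) = K*p*q := by ring
      have e2 : q*(c.1+1) = q*c.1 + q := by ring
      have e4 : 0 ≤ p*c.2 := Nat.zero_le _
      omega
    have := Nat.lt_of_mul_lt_mul_left h1
    omega
  · have h1 : p*(c.2+1) < p*(K*q) := by
      have e : p*(K*q) = K*p*q := by ring
      have e2 : p*(c.2+1) = p*c.2 + p := by ring
      have e4 : 0 ≤ q*c.1 := Nat.zero_le _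
      omega
    have := Nat.lt_of_mul_lt_mul_left h1
    omega

lemma invariant {p q K : ℕ} (hp : 0 < p) (hq : 0 < q) :
    ∀ (n : ℕ) (D : Finset (ℕ × ℕ)), D.card = n → IsYoung D →
      (∀ c ∈ D, q*c.1 + p*c.2 + p + q ≤ K*p*q) →
      (((range (K*p)) ×ˢ (range (K*q))).filter (cnt p q D)).card
        = (((range (K*p)) ×ˢ (range (K*q))).filter (cnt p q (∅ : Finset (ℕ × ℕ)))).card := by
  intro n
  induction n using Nat.strong_induction_on with
  | _ n ih =>
    intro D hcard hY hdiag
    rcases D.eq_empty_or_nonempty with rfl | hne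
    · rfl
    · obtain ⟨c₀, hc₀, hmax⟩ := D.exists_max_image (fun c => c.1 + c.2) hne
      have hc₀' : (c₀.1, c₀.2) ∈ D := by rw [Prod.mk.eta]; exact hc₀
      have hc1 : (c₀.1 + 1, c₀.2) ∉ D := fun h => by
        have := hmax _ h
        simp at this
      have hc2 : (c₀.1, c₀.2 + 1) ∉ D := fun h => by
        have := hmax _ h
        simp at this
      have hb := bounds hp hq hdiag
      have hw : q*c₀.1 + p*c₀.2 + p + q ≤ K*p*q := hdiag c₀ hc₀
      have hstep := step hp hq hY hc₀' hb hc1 hc2 hw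
      rw [hstep]
      have hcard' : (D.erase (c₀.1, c₀.2)).card = n - 1 := by
        rw [card_erase_of_mem hc₀', hcard]
      have hlt : n - 1 < n := by
        have : 0 < D.card := card_pos.mpr hne
        omega
      refine ih (n-1) hlt _ hcard' ?_ ?_
      · intro x y x' y' hxy hx' hy'
        have hxyD : (x, y) ∈ D := mem_of_mem_erase hxy
        have hmD : (x', y') ∈ D := hY x y x' y' hxyD hx' hy'
        rw [mem_erase] at hxy ⊢
        refine ⟨?_, hmD⟩
        intro heq
        rw [Prod.mk.injEq] at heq
        obtain ⟨h1, h2⟩ := heq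
        rcases Nat.lt_or_ge c₀.1 x with h | h
        · exact hc1 (hY x y (c₀.1+1) c₀.2 hxyD (by omega) (by omega))
        · rcases Nat.lt_or_ge c₀.2 y with h3 | h3
          · exact hc2 (hY x y c₀.1 (c₀.2+1) hxyD (by omega) (by omega))
          · refine hxy.1 ?_
            rw [Prod.mk.injEq]
            omega
      · intro c hc
        exact hdiag c (mem_of_mem_erase hc)

end GMaux
set_option maxHeartbeats 1000000 in
theorem GM_bijection_northwest (D : Finset (ℕ × ℕ)) (hD : IsYoung D)
    (p q K : ℕ) (hp : 0 < p) (hq : 0 < q) (hK : 0 < K) (hpq : Nat.Coprime p q)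
    (hdiag : ∀ c ∈ D, q * c.1 + p * c.2 + p + q ≤ K * p * q) :
    (D.filter fun c => q * (arm D c + 1) ≤ p * leg D c).card
      + (((Finset.range (K * p)) ×ˢ (Finset.range (K * q))).filter
          fun c => q * c.1 + p * c.2 + p + q ≤ K * p * q ∧ c ∉ D).card
      = (((Finset.range (K * p)) ×ˢ (Finset.range (K * q))).filter
          fun c => c ∉ D ∧ q * (coArm D c + 1) ≤ p * coLeg D c).card := by
  classical
  have hb := GMaux.bounds hp hq hdiag
  have hDsubR : D ⊆ (Finset.range (K * p)) ×ˢ (Finset.range (K * q)) := by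
    intro c hc
    rw [Finset.mem_product, Finset.mem_range, Finset.mem_range]
    exact hb c hc
  have hinv := (GMaux.invariant hp hq D.card D rfl hD hdiag).trans (GMaux.base hp hq)
  have hunion : ((Finset.range (K * p)) ×ˢ (Finset.range (K * q))).filter (GMaux.cnt p q D)
      = (((Finset.range (K * p)) ×ˢ (Finset.range (K * q))).filter
          (fun c => c ∈ D ∧ ¬ (q * (arm D c + 1) ≤ p * leg D c)))
        ∪ (((Finset.range (K * p)) ×ˢ (Finset.range (K * q))).filter
          (fun c => c ∉ D ∧ q * (coArm D c + 1) ≤ p * coLeg D c)) := by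
    ext c
    simp only [Finset.mem_union, Finset.mem_filter, GMaux.cnt]
    tauto
  have hdisj : Disjoint
      (((Finset.range (K * p)) ×ˢ (Finset.range (K * q))).filter
          (fun c => c ∈ D ∧ ¬ (q * (arm D c + 1) ≤ p * leg D c)))
      (((Finset.range (K * p)) ×ˢ (Finset.range (K * q))).filter
          (fun c => c ∉ D ∧ q * (coArm D c + 1) ≤ p * coLeg D c)) := by
    rw [Finset.disjoint_left]
    intro c hc1 hc2
    rw [Finset.mem_filter] at hc1 hc2
    exact hc2.2.1 hc1.2.1
  have hfirst : (((Finset.range (K * p)) ×ˢ (Finset.range (K * q))).filter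
      (fun c => c ∈ D ∧ ¬ (q * (arm D c + 1) ≤ p * leg D c)))
      = D.filter (fun c => ¬ (q * (arm D c + 1) ≤ p * leg D c)) := by
    ext c
    simp only [Finset.mem_filter]
    constructor
    · rintro ⟨-, h1, h2⟩
      exact ⟨h1, h2⟩
    · rintro ⟨h1, h2⟩
      exact ⟨hDsubR h1, h1, h2⟩
  rw [hunion, Finset.card_union_of_disjoint hdisj, hfirst] at hinv
  have hcompl : (D.filter (fun c => q * (arm D c + 1) ≤ p * leg D c)).card
      + (D.filter (fun c => ¬ (q * (arm D c + 1) ≤ p * leg D c))).card = D.card :=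
    Finset.card_filter_add_card_filter_not
      (p := fun c => q * (arm D c + 1) ≤ p * leg D c)
  have hmid : (((Finset.range (K * p)) ×ˢ (Finset.range (K * q))).filter
        (fun c => q * c.1 + p * c.2 + p + q ≤ K * p * q ∧ c ∉ D))
      = (((Finset.range (K * p)) ×ˢ (Finset.range (K * q))).filter
        (fun c => q * c.1 + p * c.2 + p + q ≤ K * p * q)) \ D := by
    ext c
    simp only [Finset.mem_filter, Finset.mem_sdiff]
    tauto
  have hDsubRp : D ⊆ ((Finset.range (K * p)) ×ˢ (Finset.range (K * q))).filter
      (fun c => q * c.1 + p * c.2 + p + q ≤ K * p * q) := by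
    intro c hc
    exact Finset.mem_filter.mpr ⟨hDsubR hc, hdiag c hc⟩
  rw [hmid, Finset.card_sdiff_of_subset hDsubRp]
  have hD_le := Finset.card_le_card hDsubRp
  omega
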